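/- Let n ≥ 2. There is no family F of 2-element subsets of [n+2] with the following property: setting B = {∅} ∪ F ∪ {all 3-element subsets of [n+2]} and R = Q_{n+2} ∖ B, the family B contains no weak copy of Q_2 and the family R contains no weak copy of Q_n. That is, for every family F of 2-element subsets of [n+2], with B and R defined as above, either B contains a weak copy of Q_2 or R contains a weak copy of Q_n. -/

import Mathlib

/-- A family `F` of subsets of `[N]` (modeled as `Finset (Fin N)`) contains a weak copy
of the Boolean lattice `Q_m`. -/
def ContainsWeakCopy (m N : ℕ) (F : Set (Finset (Fin N))) : Prop :=
  ∃ φ : Finset (Fin m) → Finset (Fin N),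
    Function.Injective φ ∧ (∀ A, φ A ∈ F) ∧
    ∀ A B : Finset (Fin m), A ⊆ B → φ A ⊆ φ B

/-- Claim 12 of the paper: for `n ≥ 2` and any family `F` of `2`-element subsets of
`[n+2]`, setting `B = {∅} ∪ F ∪ {3-element subsets}` and `R = Q_{n+2} ∖ B`, either
`B` contains a weak copy of `Q_2` or `R` contains a weak copy of `Q_n`. -/
-- Case 2 lemma
lemma case2 (n : ℕ) (F : Set (Finset (Fin (n+2)))) (hF : ∀ S ∈ F, S.card = 2)
    (s t : Fin (n+2)) (hst : s ≠ t) (hs : ∀ i, i ≠ t → ({i, s} : Finset (Fin (n+2))) ∉ F) :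
    ContainsWeakCopy n (n + 2)
      ({(∅ : Finset (Fin (n + 2)))} ∪ F ∪ {S : Finset (Fin (n + 2)) | S.card = 3})ᶜ := by
  classical
  set C : Finset (Fin (n+2)) := {s, t}ᶜ with hCdef
  have hC : C.card = n := by
    have : ({s, t} : Finset (Fin (n+2))).card = 2 := by
      rw [Finset.card_insert_of_notMem (by simpa using hst), Finset.card_singleton]
    rw [hCdef, Finset.card_compl, this, Fintype.card_fin]
    omega
  let g : Fin n → Fin (n+2) := fun i => (C.equivFin.symm (Fin.cast hC.symm i) : C)
  have hginj : Function.Injective g := by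
    intro a b hab
    have := C.equivFin.symm.injective (Subtype.ext hab)
    simpa [Fin.ext_iff] using congrArg Fin.val this
  have hgC : ∀ i, g i ∈ C := fun i => (C.equivFin.symm (Fin.cast hC.symm i)).2
  have hgs : ∀ i, g i ≠ s := by
    intro i h; have := hgC i; rw [h] at this; simp [hCdef] at this
  have hgt : ∀ i, g i ≠ t := by
    intro i h; have := hgC i; rw [h] at this; simp [hCdef] at this
  refine ⟨fun A => A.image g ∪ {s} ∪ (if 2 ≤ A.card then {t} else ∅), ?_, ?_, ?_⟩
  · -- injectivity
    intro A B hAB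
    have key : ∀ X : Finset (Fin n),
        X.image g = (X.image g ∪ {s} ∪ (if 2 ≤ X.card then {t} else ∅)) \ {s, t} := by
      intro X
      ext x
      simp only [Finset.mem_sdiff, Finset.mem_union, Finset.mem_insert,
        Finset.mem_singleton, Finset.mem_image]
      constructor
      · rintro ⟨i, hi, rfl⟩
        exact ⟨Or.inl (Or.inl ⟨i, hi, rfl⟩), by push_neg; exact ⟨hgs i, hgt i⟩⟩
      · rintro ⟨h1, h2⟩
        push_neg at h2
        rcases h1 with (h | h) | h
        · exact h
        · exact absurd h h2.1
        · split_ifs at h <;> simp only [Finset.mem_singleton, Finset.notMem_empty] at h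
          exact absurd h h2.2
    dsimp only at hAB
    have himg : A.image g = B.image g := by rw [key A, key B, hAB]
    exact Finset.image_injective hginj himg
  · -- membership in complement
    intro A
    simp only [Set.mem_compl_iff, Set.union_singleton, Set.mem_union, Set.mem_setOf_eq,
      Set.mem_insert_iff]
    have hdisj : s ∉ A.image g ∧ t ∉ A.image g := by
      constructor
      · simp only [Finset.mem_image]; rintro ⟨i, _, h⟩; exact hgs i h
      · simp only [Finset.mem_image]; rintro ⟨i, _, h⟩; exact hgt i h
    have hcard : (A.image g ∪ {s} ∪ (if 2 ≤ A.card then {t} else ∅)).card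
        = A.card + (if 2 ≤ A.card then 2 else 1) := by
      split_ifs with h2
      · rw [Finset.union_assoc]
        have : ({s} ∪ {t} : Finset (Fin (n+2))) = {s, t} := by
          exact (Finset.insert_eq s {t}).symm
        rw [this, Finset.card_union_of_disjoint, Finset.card_image_of_injective _ hginj]
        · congr 1
          rw [Finset.card_insert_of_notMem (by simpa using hst), Finset.card_singleton]
        · simp only [Finset.disjoint_insert_right, Finset.disjoint_singleton_right]
          exact ⟨hdisj.1, hdisj.2⟩
      · rw [Finset.union_empty, Finset.card_union_of_disjoint, 
          Finset.card_image_of_injective _ hginj, Finset.card_singleton]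
        simp only [Finset.disjoint_singleton_right]
        exact hdisj.1
    push_neg
    refine ⟨⟨?_, ?_⟩, ?_⟩
    · -- not ∅
      intro h
      have : s ∈ (∅ : Finset (Fin (n+2))) := by
        rw [← h]; simp
      simp at this
    · -- not in F
      intro hmem
      have h2 : (A.image g ∪ {s} ∪ (if 2 ≤ A.card then {t} else ∅)).card = 2 := hF _ hmem
      rw [hcard] at h2
      split_ifs at h2 with hle
      · omega
      · -- A.card = 1
        have hA1 : A.card = 1 := by omega
        obtain ⟨i, rfl⟩ := Finset.card_eq_one.mp hA1
        rw [if_neg hle] at hmem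
        have : ({i} : Finset (Fin n)).image g ∪ {s} ∪ ∅ = {g i, s} := by
          rw [Finset.image_singleton, Finset.union_empty, Finset.insert_eq]
        rw [this] at hmem
        exact hs (g i) (hgt i) hmem
    · -- card ≠ 3
      rw [hcard]
      split_ifs <;> omega
  · -- monotone
    intro A B hAB
    refine Finset.union_subset_union (Finset.union_subset_union ?_ le_rfl) ?_
    · exact Finset.image_subset_image hAB
    · split_ifs with h1 h2
      · exact subset_rfl
      · exact absurd (h1.trans (Finset.card_le_card hAB)) h2
      · exact Finset.empty_subset _
      · exact subset_rfl

lemma case1 (n : ℕ) (F : Set (Finset (Fin (n+2)))) (hF : ∀ S ∈ F, S.card = 2)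
    (S1 S2 : Finset (Fin (n+2))) (h1 : S1 ∈ F) (h2 : S2 ∈ F) (hne : S1 ≠ S2)
    (hnd : ¬ Disjoint S1 S2) :
    ContainsWeakCopy 2 (n + 2)
      ({(∅ : Finset (Fin (n + 2)))} ∪ F ∪ {S : Finset (Fin (n + 2)) | S.card = 3}) := by
  classical
  have hc1 : S1.card = 2 := hF _ h1
  have hc2 : S2.card = 2 := hF _ h2
  have hcU : (S1 ∪ S2).card = 3 := by
    have hint : (S1 ∩ S2).card = 1 := by
      have hnonempty : (S1 ∩ S2).Nonempty := by
        rw [Finset.not_disjoint_iff] at hnd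
        obtain ⟨x, hx1, hx2⟩ := hnd
        exact ⟨x, Finset.mem_inter.mpr ⟨hx1, hx2⟩⟩
      have hle1 : (S1 ∩ S2).card ≤ 2 :=
        le_trans (Finset.card_le_card Finset.inter_subset_left) hc1.le
      have hge : 1 ≤ (S1 ∩ S2).card := Finset.card_pos.mpr hnonempty
      rcases Nat.lt_or_ge (S1 ∩ S2).card 2 with h | h
      · omega
      · exfalso
        have e1 : S1 ∩ S2 = S1 :=
          Finset.eq_of_subset_of_card_le Finset.inter_subset_left (by omega)
        have e2 : S1 ∩ S2 = S2 :=
          Finset.eq_of_subset_of_card_le Finset.inter_subset_right (by omega)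
        exact hne (e1 ▸ e2)
    have := Finset.card_union_add_card_inter S1 S2
    omega
  refine ⟨fun A => (if (0 : Fin 2) ∈ A then S1 else ∅) ∪ (if (1 : Fin 2) ∈ A then S2 else ∅),
    ?_, ?_, ?_⟩
  · intro A B h
    dsimp only at h
    by_cases h0A : (0:Fin 2) ∈ A <;> by_cases h1A : (1:Fin 2) ∈ A <;>
      by_cases h0B : (0:Fin 2) ∈ B <;> by_cases h1B : (1:Fin 2) ∈ B <;>
      simp only [h0A, h1A, h0B, h1B, if_true, if_false, ite_true, ite_false,
        Finset.union_empty, Finset.empty_union] at h <;>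
      first
        | (exact absurd h hne)
        | (exact absurd h.symm hne)
        | (exfalso; apply_fun Finset.card at h;
           simp only [Finset.card_empty, hc1, hc2, hcU] at h; omega)
        | (ext x; fin_cases x <;> simp_all)
  · intro A
    dsimp only
    by_cases h0A : (0:Fin 2) ∈ A <;> by_cases h1A : (1:Fin 2) ∈ A <;>
      simp only [h0A, h1A, if_true, if_false, ite_true, ite_false,
        Finset.union_empty, Finset.empty_union]
    · exact Or.inr hcU
    · exact Or.inl (Or.inr h1)
    · exact Or.inl (Or.inr h2)
    · exact Or.inl (Or.inl rfl)
  · intro A B hAB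
    refine Finset.union_subset_union ?_ ?_ <;> split_ifs with hA hB
    any_goals exact subset_rfl
    any_goals exact Finset.empty_subset _
    · exact absurd (hAB hA) hB
    · exact absurd (hAB hA) ‹_›


theorem cox_stolee_fails_for_m_two (n : ℕ) (hn : 2 ≤ n)
    (F : Set (Finset (Fin (n + 2)))) (hF : ∀ S ∈ F, S.card = 2) :
    ContainsWeakCopy 2 (n + 2)
      ({(∅ : Finset (Fin (n + 2)))} ∪ F ∪ {S : Finset (Fin (n + 2)) | S.card = 3}) ∨
    ContainsWeakCopy n (n + 2)
      ({(∅ : Finset (Fin (n + 2)))} ∪ F ∪ {S : Finset (Fin (n + 2)) | S.card = 3})ᶜ := by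
  classical
  by_cases hx : ∃ S1 ∈ F, ∃ S2 ∈ F, S1 ≠ S2 ∧ ¬ Disjoint S1 S2
  · obtain ⟨S1, h1, S2, h2, hne, hnd⟩ := hx
    exact Or.inl (case1 n F hF S1 S2 h1 h2 hne hnd)
  · right
    push_neg at hx
    by_cases hFE : ∃ S, S ∈ F
    · obtain ⟨S, hS⟩ := hFE
      obtain ⟨s, t, hst, rfl⟩ := Finset.card_eq_two.mp (hF _ hS)
      apply case2 n F hF s t hst
      intro i hit hmem
      have hine : i ≠ s := by
        intro h
        have := hF _ hmem
        rw [h] at this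
        simp at this
      have heq : ({i, s} : Finset (Fin (n+2))) = {s, t} := by
        by_contra hne'
        have hd := hx _ hmem _ hS hne'
        rw [Finset.disjoint_left] at hd
        exact hd (show s ∈ ({i, s} : Finset (Fin (n+2))) by simp)
          (show s ∈ ({s, t} : Finset (Fin (n+2))) by simp)
      have : i ∈ ({s, t} : Finset (Fin (n+2))) := by
        rw [← heq]; simp
      simp only [Finset.mem_insert, Finset.mem_singleton] at this
      rcases this with h | h
      · exact hine h
      · exact hit h
    · push_neg at hFE
      apply case2 n F hF ⟨0, by omega⟩ ⟨1, by omega⟩ (by simp [Fin.ext_iff])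
      intro i _ h
      exact hFE _ h
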